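/- Let C be an n×n circulant matrix with first column w = (v_1,...,v_{n-1}, -Σv_i) where v ≠ 0, and let f_v(x) = v_1 + v_2x + ... + v_{n-1}x^{n-2} - (Σv_i)x^{n-1} be its associated polynomial. If deg(gcd(f_v(x), x^n - 1)) = 1, then the vectors v, Av, A²v, ..., A^{n-1}v span ℂ^{n-1}, where A is the matrix of the cyclic shift acting on zero-sum vectors. -/

import Mathlib

open Polynomial

def Amat (n : ℕ) : Matrix (Fin (n - 1)) (Fin (n - 1)) ℂ :=
  fun i j => if i.val = 0 then -1 else if i.val = j.val + 1 then 1 else 0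

/-- The polynomial `f_v(x) = v_1 + v_2 x + ⋯ + v_{n-1} x^{n-2} - (Σᵢ vᵢ) x^{n-1}`
associated to the circulant matrix with first column `(v_1, …, v_{n-1}, -Σᵢ vᵢ)`. -/
noncomputable def fpoly (n : ℕ) (v : Fin (n - 1) → ℂ) : Polynomial ℂ :=
  (∑ i : Fin (n - 1), Polynomial.C (v i) * Polynomial.X ^ (i : ℕ))
    - Polynomial.C (∑ i, v i) * Polynomial.X ^ (n - 1)

lemma amat_cons (k : ℕ) (w : Fin (k+1) → ℂ) :
    (Amat (k+2)).mulVec w = Fin.cons (-∑ j, w j) (fun i : Fin k => w i.castSucc) := by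
  funext i
  induction i using Fin.cases with
  | zero =>
    simp [Amat, Matrix.mulVec, dotProduct, neg_mul]
  | succ i =>
    simp only [Fin.cons_succ]
    show ∑ j, (if (i.succ : Fin (k+1)).val = 0 then (-1:ℂ) else if (i.succ : Fin (k+1)).val = j.val + 1 then 1 else 0) * w j = _
    have h1 : ∀ j : Fin (k+1),
        (if (i.succ : Fin (k+1)).val = 0 then (-1:ℂ) else if (i.succ : Fin (k+1)).val = j.val + 1 then 1 else 0) * w j
        = if j = i.castSucc then w j else 0 := by
      intro j
      by_cases h : j = i.castSucc
      · subst h; simp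
      · rw [if_neg (by simp), if_neg, zero_mul, if_neg h]
        simp only [Fin.val_succ, Fin.ext_iff, Fin.coe_castSucc] at h ⊢
        omega
    rw [Finset.sum_congr rfl (fun j _ => h1 j), Finset.sum_ite_eq']
    simp

lemma fpoly_eq (k : ℕ) (w : Fin (k+1) → ℂ) :
    fpoly (k+2) w = (∑ i : Fin (k+1), C (w i) * X ^ (i : ℕ)) - C (∑ i, w i) * X ^ (k+1) := rfl

lemma fpoly_step (k : ℕ) (w : Fin (k+1) → ℂ) :
    fpoly (k+2) ((Amat (k+2)).mulVec w) =
      X * fpoly (k+2) w + C (∑ i, w i) * (X^(k+2) - 1) := by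
  rw [fpoly_eq, fpoly_eq, amat_cons]
  rw [Fin.sum_univ_succ (f := fun i : Fin (k+1) => C ((Fin.cons (-∑ j, w j) (fun i : Fin k => w i.castSucc) : Fin (k+1) → ℂ) i) * X ^ (i:ℕ))]
  rw [Fin.sum_univ_succ (f := (Fin.cons (-∑ j, w j) (fun i : Fin k => w i.castSucc) : Fin (k+1) → ℂ))]
  rw [Fin.sum_univ_castSucc (f := fun i : Fin (k+1) => C (w i) * X ^ (i:ℕ))]
  rw [Fin.sum_univ_castSucc (f := w)]
  simp only [Fin.cons_zero, Fin.cons_succ, Fin.val_succ, Fin.coe_castSucc, Fin.val_zero,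
    Fin.val_last, map_add, map_neg, map_sum, pow_zero]
  have hs : ∑ x : Fin k, C (w x.castSucc) * X ^ ((x:ℕ)+1)
      = X * ∑ x : Fin k, C (w x.castSucc) * X ^ (x:ℕ) := by
    rw [Finset.mul_sum]; exact Finset.sum_congr rfl (fun x _ => by ring)
  rw [hs]
  ring

lemma fpoly_add (n : ℕ) (w w' : Fin (n-1) → ℂ) :
    fpoly n (w + w') = fpoly n w + fpoly n w' := by
  simp only [fpoly, Pi.add_apply, map_add, add_mul, Finset.sum_add_distrib]
  ring

lemma fpoly_smul (n : ℕ) (c : ℂ) (w : Fin (n-1) → ℂ) :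
    fpoly n (c • w) = C c * fpoly n w := by
  have hs : (∑ x : Fin (n-1), (c • w) x) = c * ∑ x, w x := by
    simp [Finset.mul_sum]
  unfold fpoly
  rw [hs, map_mul, mul_sub, Finset.mul_sum]
  congr 1
  · exact Finset.sum_congr rfl fun i _ => by simp; ring
  · ring

lemma fpoly_natDegree_lt (n : ℕ) (hn : 2 ≤ n) (w : Fin (n-1) → ℂ) :
    (fpoly n w).natDegree < n := by
  have h1 : (∑ i : Fin (n-1), C (w i) * X ^ (i : ℕ)).natDegree ≤ n - 1 :=
    Polynomial.natDegree_sum_le_of_forall_le _ _ (fun i _ =>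
      (Polynomial.natDegree_C_mul_X_pow_le _ _).trans (by have := i.isLt; omega))
  have h2 : (C (∑ i, w i) * X ^ (n-1)).natDegree ≤ n - 1 :=
    Polynomial.natDegree_C_mul_X_pow_le _ _
  have hm : (fpoly n w).natDegree ≤ n - 1 :=
    (Polynomial.natDegree_sub_le _ _).trans (max_le h1 h2)
  omega

lemma fpoly_eq_zero (k : ℕ) (w : Fin (k+1) → ℂ) (h : fpoly (k+2) w = 0) : w = 0 := by
  rw [fpoly_eq] at h
  funext i
  have h2 := congrArg (fun p => p.coeff (i:ℕ)) h
  simp only [Polynomial.coeff_sub, Polynomial.finset_sum_coeff,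
    Polynomial.coeff_C_mul, Polynomial.coeff_X_pow, Polynomial.coeff_zero] at h2
  have h3 : ∀ j : Fin (k+1), w j * (if (i:ℕ) = (j:ℕ) then (1:ℂ) else 0)
      = if j = i then w j else 0 := by
    intro j
    by_cases hj : j = i
    · subst hj; simp
    · rw [if_neg, mul_zero, if_neg hj]
      exact fun hc => hj (Fin.ext hc.symm)
  rw [Finset.sum_congr rfl (fun j _ => h3 j), Finset.sum_ite_eq'] at h2
  have hik : ¬ ((i:ℕ) = k + 1) := by have := i.isLt; omega
  simpa [hik] using h2

lemma fpoly_root_one (n : ℕ) (w : Fin (n-1) → ℂ) :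
    (X - 1 : ℂ[X]) ∣ fpoly n w := by
  have : (X - C 1 : ℂ[X]) ∣ fpoly n w := by
    rw [Polynomial.dvd_iff_isRoot]
    simp [Polynomial.IsRoot, fpoly, Polynomial.eval_finset_sum]
  simpa using this

theorem stmt16 (n : ℕ) (hn : 2 ≤ n) (v : Fin (n - 1) → ℂ) (hv : v ≠ 0)
    (hgcd : (EuclideanDomain.gcd (fpoly n v) (Polynomial.X ^ n - 1)).natDegree = 1) :
    Submodule.span ℂ {w : Fin (n - 1) → ℂ | ∃ j, j < n ∧ w = ((Amat n) ^ j).mulVec v}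
      = ⊤ := by
  obtain ⟨k, rfl⟩ : ∃ k, n = k + 2 := ⟨n - 2, by omega⟩
  set q : ℂ[X] := X ^ (k+2) - 1 with hq
  have hqmonic : q.Monic := by
    have := Polynomial.monic_X_pow_sub_C (1 : ℂ) (n := k+2) (by omega)
    simpa [hq] using this
  have hqdeg : q.natDegree = k + 2 := by
    have := Polynomial.natDegree_X_pow_sub_C (n := k+2) (r := (1:ℂ))
    simpa [hq] using this
  -- injectivity of w ↦ mk q (fpoly w)
  have hinj : ∀ w : Fin (k+1) → ℂ, AdjoinRoot.mk q (fpoly (k+2) w) = 0 → w = 0 := by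
    intro w hw
    rw [AdjoinRoot.mk_eq_zero] at hw
    refine fpoly_eq_zero k w (Polynomial.eq_zero_of_dvd_of_natDegree_lt hw ?_)
    rw [hqdeg]
    exact fpoly_natDegree_lt (k+2) (by omega) w
  -- powers
  have hpow : ∀ j : ℕ, AdjoinRoot.mk q (fpoly (k+2) (((Amat (k+2)) ^ j).mulVec v))
      = (AdjoinRoot.root q) ^ j * AdjoinRoot.mk q (fpoly (k+2) v) := by
    intro j
    induction j with
    | zero => simp [Matrix.one_mulVec]
    | succ j ih =>
      rw [pow_succ' (Amat (k+2)) j, ← Matrix.mulVec_mulVec, fpoly_step, map_add, map_mul,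
        map_mul, AdjoinRoot.mk_X, AdjoinRoot.mk_self, mul_zero, add_zero, ih, pow_succ']
      ring
  -- gcd analysis
  set f : ℂ[X] := fpoly (k+2) v with hf
  set g : ℂ[X] := EuclideanDomain.gcd f q with hg
  have hgcd' : g.natDegree = 1 := hgcd
  have hx1q : (X - 1 : ℂ[X]) ∣ q := by
    have : (X - C 1 : ℂ[X]) ∣ q := by
      rw [Polynomial.dvd_iff_isRoot]
      simp [hq]
    simpa using this
  have hx1g : (X - 1 : ℂ[X]) ∣ g := EuclideanDomain.dvd_gcd (fpoly_root_one (k+2) v) hx1q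
  have hgne : g ≠ 0 := by
    intro h
    rw [h] at hgcd'
    simp at hgcd'
  obtain ⟨t, ht⟩ := hx1g
  have htne : t ≠ 0 := by rintro rfl; rw [mul_zero] at ht; exact hgne ht
  have hx1ne : (X - 1 : ℂ[X]) ≠ 0 := by
    intro h
    have := Polynomial.natDegree_X_sub_C (1:ℂ)
    rw [show (X - C 1 : ℂ[X]) = X - 1 by simp, h] at this
    simp at this
  have hdegt : t.natDegree = 0 := by
    have hdx : (X - 1 : ℂ[X]).natDegree = 1 := by
      have := Polynomial.natDegree_X_sub_C (1:ℂ)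
      rwa [show (X - C 1 : ℂ[X]) = X - 1 by simp] at this
    have := Polynomial.natDegree_mul hx1ne htne
    rw [← ht, hgcd', hdx] at this
    omega
  set c : ℂ := t.coeff 0 with hc
  have htc : t = C c := Polynomial.eq_C_of_natDegree_eq_zero hdegt
  have hcne : c ≠ 0 := by
    intro h
    rw [htc, h, map_zero] at htne
    exact htne rfl
  have hX1 : (X - 1 : ℂ[X]) = C c⁻¹ * g := by
    rw [ht, htc]
    rw [mul_comm (X - 1 : ℂ[X]) (C c), ← mul_assoc, ← map_mul]
    rw [inv_mul_cancel₀ hcne, map_one, one_mul]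
  have hbez : g = f * EuclideanDomain.gcdA f q + q * EuclideanDomain.gcdB f q :=
    EuclideanDomain.gcd_eq_gcd_ab f q
  -- main span argument
  rw [eq_top_iff]
  rintro w -
  obtain ⟨r, hr⟩ := fpoly_root_one (k+2) w
  set a : ℂ[X] := C c⁻¹ * EuclideanDomain.gcdA f q * r with ha
  set b : ℂ[X] := C c⁻¹ * EuclideanDomain.gcdB f q * r with hb
  have hw : fpoly (k+2) w = f * a + q * b := by
    rw [hr, hX1, hbez]; ring
  set s : ℂ[X] := a %ₘ q with hs
  have hsdeg : s.natDegree < k + 2 := by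
    have h1 := Polynomial.natDegree_modByMonic_lt a hqmonic (by
      intro h1
      have := congrArg Polynomial.natDegree h1
      rw [hqdeg] at this
      simp at this)
    rw [← hs, hqdeg] at h1
    exact h1
  have hmod : s + q * (a /ₘ q) = a := Polynomial.modByMonic_add_div a q
  have hmk : AdjoinRoot.mk q (fpoly (k+2) w) = AdjoinRoot.mk q (f * s) := by
    rw [hw, ← hmod, mul_add]
    simp only [map_add, map_mul, AdjoinRoot.mk_self, zero_mul, mul_zero, add_zero]
  -- expand s
  have hssum : s = ∑ j ∈ Finset.range (k+2), C (s.coeff j) * X ^ j := by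
    conv_lhs => rw [Polynomial.as_sum_range' s (k+2) hsdeg]
    exact Finset.sum_congr rfl (fun j _ => (Polynomial.C_mul_X_pow_eq_monomial).symm)
  set w' : Fin (k+2-1) → ℂ := ∑ j ∈ Finset.range (k+2), s.coeff j • ((Amat (k+2)) ^ j).mulVec v
    with hw'
  have hfw' : AdjoinRoot.mk q (fpoly (k+2) w') = AdjoinRoot.mk q (f * s) := by
    have hlin : fpoly (k+2) w' = ∑ j ∈ Finset.range (k+2),
        C (s.coeff j) * fpoly (k+2) (((Amat (k+2)) ^ j).mulVec v) := by
      rw [hw']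
      induction (Finset.range (k+2)) using Finset.induction_on with
      | empty => simp [fpoly]
      | insert _ _ hx ih =>
        rw [Finset.sum_insert hx, Finset.sum_insert hx, fpoly_add, fpoly_smul, ih]
    have hrhs : AdjoinRoot.mk q (f * s) = ∑ j ∈ Finset.range (k+2),
        AdjoinRoot.mk q (C (s.coeff j) * X ^ j * f) := by
      conv_lhs => rw [hssum]
      rw [Finset.mul_sum, map_sum]
      exact Finset.sum_congr rfl fun j _ => by rw [mul_comm]
    rw [hlin, map_sum, hrhs]
    refine Finset.sum_congr rfl (fun j hj => ?_)
    rw [map_mul, hpow j, map_mul, map_mul, map_pow, AdjoinRoot.mk_X]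
    ring
  have hzero : w - w' = 0 := by
    refine hinj _ ?_
    have h2 : w - w' = w + (-1 : ℂ) • w' := by
      funext i; simp [sub_eq_add_neg]
    rw [h2, fpoly_add, fpoly_smul, map_add, map_mul, hmk, hfw']
    simp
  have hweq : w = w' := sub_eq_zero.mp hzero
  rw [hweq, hw']
  refine Submodule.sum_mem _ (fun j hj => ?_)
  refine Submodule.smul_mem _ _ (Submodule.subset_span ?_)
  exact ⟨j, Finset.mem_range.mp hj, rfl⟩
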